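/- Let 𝒯 ⊆ ℝ^q be nonempty, closed, convex with 𝒯 ≠ ℝ^q and recession cone containing C (a solid pointed polyhedral cone with c ∈ int C, c_q = 1). Define 𝒯* = {y* ∈ ℝ^q : φ(y,y*) ≥ 0 for all y ∈ 𝒯}. Then 𝒯 = {y ∈ ℝ^q : φ(y,y*) ≥ 0 for all y* ∈ 𝒯*}. -/
import Mathlib

open Matrix

/-- The coupling function of geometric duality. -/
def phiCoupling (q : ℕ) (c y ystar : Fin (q + 1) → ℝ) : ℝ :=
  (∑ i : Fin q, y i.castSucc * ystar i.castSucc)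
    + y (Fin.last q) * (1 - ∑ i : Fin q, c i.castSucc * ystar i.castSucc)
    - ystar (Fin.last q)

/-- Biduality: for a nonempty closed convex set 𝒯 ≠ ℝ^q whose recession cone contains C,
one has 𝒯 = {y : φ(y, y*) ≥ 0 for all y* ∈ 𝒯*}. -/
theorem biduality
    (q p : ℕ)
    (Y : Matrix (Fin (q+1)) (Fin p) ℝ)
    (C : Set (Fin (q+1) → ℝ))
    (hC : C = {y | ∃ lam : Fin p → ℝ, 0 ≤ lam ∧ y = Y.mulVec lam})
    (hCpointed : ∀ x ∈ C, -x ∈ C → x = 0)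
    (c : Fin (q+1) → ℝ) (hc : c ∈ interior C) (hcq : c (Fin.last q) = 1)
    (T : Set (Fin (q+1) → ℝ))
    (hTne : T.Nonempty) (hTclosed : IsClosed T) (hTconv : Convex ℝ T)
    (hTneuniv : T ≠ Set.univ)
    (hCrec : ∀ k ∈ C, ∀ y ∈ T, ∀ t : ℝ, 0 ≤ t → y + t • k ∈ T)
    (Tstar : Set (Fin (q+1) → ℝ))
    (hTstar : Tstar = {ystar | ∀ y ∈ T, 0 ≤ phiCoupling q c y ystar}) :
    T = {y | ∀ ystar ∈ Tstar, 0 ≤ phiCoupling q c y ystar} := by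
  ext y₀
  simp only [Set.mem_setOf_eq]
  constructor
  · intro hy₀ ystar hystar
    rw [hTstar] at hystar
    exact hystar y₀ hy₀
  · intro h
    by_contra hy₀
    obtain ⟨f, u, hfy₀, hfT⟩ := geometric_hahn_banach_point_closed hTconv hTclosed hy₀
    obtain ⟨y₁, hy₁⟩ := hTne
    -- f is nonnegative on C
    have hfC : ∀ k ∈ C, 0 ≤ f k := by
      intro k hk
      by_contra hneg
      push_neg at hneg
      set t : ℝ := max 0 ((u - f y₁) / f k) with ht
      have ht0 : 0 ≤ t := le_max_left _ _
      have hmem := hCrec k hk y₁ hy₁ t ht0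
      have h1 : u < f (y₁ + t • k) := hfT _ hmem
      have h2 : f (y₁ + t • k) = f y₁ + t * f k := by
        rw [map_add, f.map_smul]; rfl
      have h3 : t * f k ≤ (u - f y₁) / f k * f k :=
        mul_le_mul_of_nonpos_right (le_max_right _ _) hneg.le
      rw [div_mul_cancel₀ _ (ne_of_lt hneg)] at h3
      linarith [h1, h2 ▸ h1]
    -- f c > 0
    have hv : 0 < f (y₁ - y₀) := by
      have := hfT y₁ hy₁
      have h2 : f y₁ - f y₀ > 0 := by linarith
      rw [f.map_sub]; linarith
    have hβ : 0 < f c := by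
      set v := y₁ - y₀ with hvdef
      have hCnhds : C ∈ nhds c := mem_interior_iff_mem_nhds.mp hc
      have hcont : Filter.Tendsto (fun t : ℝ => c - t • v) (nhds 0) (nhds c) := by
        have : Filter.Tendsto (fun t : ℝ => c - t • v) (nhds 0) (nhds (c - (0:ℝ) • v)) := by
          apply Filter.Tendsto.sub tendsto_const_nhds
          exact (continuous_id.smul continuous_const).tendsto 0
        simpa using this
      have hev : ∀ᶠ t : ℝ in nhds 0, c - t • v ∈ C := hcont.eventually hCnhds
      have hev' : ∀ᶠ t : ℝ in nhdsWithin 0 (Set.Ioi 0), c - t • v ∈ C :=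
        hev.filter_mono nhdsWithin_le_nhds
      obtain ⟨t, htC, ht0⟩ := (hev'.and self_mem_nhdsWithin).exists
      have h1 : 0 ≤ f (c - t • v) := hfC _ htC
      have h2 : f (c - t • v) = f c - t * f v := by
        rw [f.map_sub, f.map_smul]; rfl
      have ht0' : (0:ℝ) < t := ht0
      nlinarith [mul_pos ht0' hv]
    set β := f c with hβdef
    -- expression of f as a sum
    have hf_sum : ∀ x : Fin (q+1) → ℝ, f x = ∑ j, x j * f (Pi.single j 1) := by
      intro x
      have hx : x = ∑ j, x j • (Pi.single j 1 : Fin (q+1) → ℝ) := by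
        ext i
        simp [Pi.single_apply, Finset.sum_apply]
      conv_lhs => rw [hx]
      rw [map_sum]
      simp [smul_eq_mul]
    set F : Fin (q+1) → ℝ := fun j => f (Pi.single j 1) with hF
    set ystar : Fin (q+1) → ℝ :=
      fun j => if j = Fin.last q then u / β else F j / β with hystar_def
    have hys_cast : ∀ i : Fin q, ystar i.castSucc = F i.castSucc / β := by
      intro i
      rw [hystar_def]
      simp only [if_neg (ne_of_lt (Fin.castSucc_lt_last i))]
    have hys_last : ystar (Fin.last q) = u / β := by
      rw [hystar_def]; simp
    -- key identity
    have key : ∀ y : Fin (q+1) → ℝ, phiCoupling q c y ystar = (f y - u) / β := by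
      intro y
      have hfy : f y = (∑ i : Fin q, y i.castSucc * F i.castSucc) + y (Fin.last q) * F (Fin.last q) := by
        rw [hf_sum y, Fin.sum_univ_castSucc]
      have hfc : (∑ i : Fin q, c i.castSucc * F i.castSucc) + F (Fin.last q) = β := by
        have := hf_sum c
        rw [Fin.sum_univ_castSucc, hcq, one_mul] at this
        exact this.symm
      unfold phiCoupling
      simp only [hys_cast, hys_last]
      have e1 : ∑ i : Fin q, y i.castSucc * (F i.castSucc / β)
          = (∑ i : Fin q, y i.castSucc * F i.castSucc) / β := by
        rw [Finset.sum_div]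
        exact Finset.sum_congr rfl fun i _ => (mul_div_assoc _ _ _).symm
      have e2 : ∑ i : Fin q, c i.castSucc * (F i.castSucc / β)
          = (∑ i : Fin q, c i.castSucc * F i.castSucc) / β := by
        rw [Finset.sum_div]
        exact Finset.sum_congr rfl fun i _ => (mul_div_assoc _ _ _).symm
      have hFl : F (Fin.last q) = β - ∑ i : Fin q, c i.castSucc * F i.castSucc := by
        linarith
      rw [e1, e2, hfy, hFl]
      field_simp
    -- ystar ∈ Tstar
    have hmem : ystar ∈ Tstar := by
      rw [hTstar]
      intro y hy
      rw [key]
      have := hfT y hy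
      exact div_nonneg (by linarith) hβ.le
    have hfinal := h ystar hmem
    rw [key] at hfinal
    have hneg' : (f y₀ - u) / β < 0 := div_neg_of_neg_of_pos (by linarith) hβ
    linarith
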